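/- For n ≥ 3, the flood polynomial of the path on 2n vertices factors as the product of the flood polynomial of the path on n vertices and the flood polynomial of the cycle on n vertices: F_{P_{2n}}(x) = F_{P_n}(x) · F_{O_n}(x). -/

import Mathlib

set_option linter.unusedSectionVars false
set_option linter.unusedVariables false
set_option maxHeartbeats 1000000



open scoped Classical
open Polynomial

/-- One step of the cascade sequence: add all vertices having at least two
neighbors in the current set. -/
noncomputable def floodStep {V : Type*} (G : SimpleGraph V) [Fintype V]
    (C : Finset V) : Finset V :=
  C ∪ Finset.univ.filter (fun x => 2 ≤ (C.filter (fun y => G.Adj x y)).card)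

/-- `C` completely floods `G`: the cascade sequence stabilizes to all of `V`.
Since `floodStep` is inflationary, this is equivalent to some iterate being `univ`. -/
def Floods {V : Type*} (G : SimpleGraph V) [Fintype V] (C : Finset V) : Prop :=
  ∃ k, (floodStep G)^[k] C = Finset.univ

/-- The flood polynomial of `G`. -/
noncomputable def floodPoly {V : Type*} (G : SimpleGraph V) [Fintype V] :
    Polynomial ℕ :=
  ∑ C ∈ Finset.univ.filter (fun C : Finset V => Floods G C), Polynomial.X ^ C.card

/-- The degree of a vertex. -/
noncomputable def deg {V : Type*} (G : SimpleGraph V) [Fintype V] (v : V) : ℕ :=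
  (Finset.univ.filter (fun y => G.Adj v y)).card

namespace FloodAux

open Finset

variable {V : Type*} [Fintype V] {G : SimpleGraph V}

lemma subset_floodStep (G : SimpleGraph V) (C : Finset V) : C ⊆ floodStep G C :=
  Finset.subset_union_left

lemma floodStep_univ (G : SimpleGraph V) : floodStep G (univ : Finset V) = univ := by
  simp [floodStep]

lemma not_floods_of_invariant (P : Finset V → Prop)
    (hstep : ∀ C, P C → P (floodStep G C)) {C : Finset V} (hC : P C)
    (huniv : ¬ P Finset.univ) : ¬ Floods G C := by
  rintro ⟨k, hk⟩
  have h : ∀ j, P ((floodStep G)^[j] C) := by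
    intro j; induction j with
    | zero => simpa using hC
    | succ j ih => rw [Function.iterate_succ_apply']; exact hstep _ ih
  exact huniv (hk ▸ h k)

lemma not_mem_floodStep {C : Finset V} {x : V} (hx : x ∉ C)
    (h : (C.filter (fun y => G.Adj x y)).card ≤ 1) : x ∉ floodStep G C := by
  simp only [floodStep, Finset.mem_union, Finset.mem_filter, Finset.mem_univ, true_and,
    not_or]
  exact ⟨hx, by omega⟩

lemma card_adj_le_one {C : Finset V} {x : V}
    (h : ∀ y ∈ C, ∀ z ∈ C, G.Adj x y → G.Adj x z → y = z) :
    (C.filter (fun y => G.Adj x y)).card ≤ 1 := by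
  apply Finset.card_le_one.mpr
  intro y hy z hz
  simp only [Finset.mem_filter] at hy hz
  exact h y hy.1 z hz.1 hy.2 hz.2

lemma mem_floodStep_of_two {C : Finset V} {x a b : V} (hab : a ≠ b)
    (ha : a ∈ C) (hb : b ∈ C) (hadj : G.Adj x a) (hadj' : G.Adj x b) :
    x ∈ floodStep G C := by
  apply Finset.mem_union_right
  simp only [Finset.mem_filter, Finset.mem_univ, true_and]
  calc 2 = ({a, b} : Finset V).card := (Finset.card_pair hab).symm
    _ ≤ (C.filter (fun y => G.Adj x y)).card := by
        apply Finset.card_le_card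
        intro y hy
        simp only [Finset.mem_insert, Finset.mem_singleton] at hy
        rcases hy with rfl | rfl <;> simp [Finset.mem_filter, ha, hb, hadj, hadj']

lemma floods_of_progress (Q : Finset V → Prop)
    (hmono : ∀ C D : Finset V, C ⊆ D → Q C → Q D)
    (hprog : ∀ C : Finset V, Q C → C ≠ univ → C ⊂ floodStep G C)
    {C : Finset V} (hC : Q C) : Floods G C := by
  suffices h : ∀ j (C : Finset V), Q C → Fintype.card V ≤ C.card + j →
      (floodStep G)^[j] C = univ by
    exact ⟨Fintype.card V, h _ _ hC (by omega)⟩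
  intro j
  induction j with
  | zero =>
    intro C hQ hcard
    have h1 := Finset.card_le_univ C
    simp only [Function.iterate_zero, id]
    exact Finset.card_eq_iff_eq_univ C |>.mp (by omega)
  | succ j ih =>
    intro C hQ hcard
    rw [Function.iterate_succ_apply]
    by_cases hu : C = univ
    · subst hu
      rw [floodStep_univ]
      exact ih _ hQ (by simp [Finset.card_univ])
    · have hlt := Finset.card_lt_card (hprog C hQ hu)
      exact ih _ (hmono _ _ (subset_floodStep G C) hQ) (by omega)

/-- Path condition on the set of values. -/
def pcond (m : ℕ) (S : Finset ℕ) : Prop :=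
  0 ∈ S ∧ m - 1 ∈ S ∧ ∀ k, k + 2 ≤ m → (k ∈ S ∨ k + 1 ∈ S)

/-- Cycle condition on the set of values. -/
def ccond (n : ℕ) (S : Finset ℕ) : Prop :=
  ∀ k, k < n → (k ∈ S ∨ (k + 1) % n ∈ S)

lemma mem_image_val {m : ℕ} (C : Finset (Fin m)) {k : ℕ} (h : k < m) :
    k ∈ C.image Fin.val ↔ (⟨k, h⟩ : Fin m) ∈ C := by
  simp only [Finset.mem_image]
  constructor
  · rintro ⟨c, hc, rfl⟩
    simpa [Fin.eta] using hc
  · intro h'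
    exact ⟨_, h', rfl⟩

lemma fin_mk_eq {m : ℕ} {y : Fin m} {j : ℕ} {h : j < m} (hv : (y : ℕ) = j) :
    y = ⟨j, h⟩ := Fin.ext (by simpa using hv)

lemma floods_path_iff {m : ℕ} (hm : 2 ≤ m) (C : Finset (Fin m)) :
    Floods (SimpleGraph.pathGraph m) C ↔ pcond m (C.image Fin.val) := by
  constructor
  · intro hF
    by_contra hP
    unfold pcond at hP
    push_neg at hP
    by_cases h0 : (0 : ℕ) ∈ C.image Fin.val
    · by_cases h1 : (m - 1 : ℕ) ∈ C.image Fin.val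
      · obtain ⟨k, hk2, hknot, hk1not⟩ := hP h0 h1
        rw [mem_image_val C (by omega)] at hknot
        rw [mem_image_val C (by omega)] at hk1not
        refine not_floods_of_invariant
          (fun D => (⟨k, by omega⟩ : Fin m) ∉ D ∧ (⟨k + 1, by omega⟩ : Fin m) ∉ D)
          ?_ ⟨hknot, hk1not⟩ (by simp) hF
        rintro D ⟨hd1, hd2⟩
        constructor
        · refine not_mem_floodStep hd1 (card_adj_le_one ?_)
          intro y hy z hz hadjy hadjz
          rw [SimpleGraph.pathGraph_adj] at hadjy hadjz
          simp only [Fin.val_mk] at hadjy hadjz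
          have hyk : (y : ℕ) ≠ k + 1 := by
            intro hh
            have hy2 : y = ⟨k + 1, by omega⟩ := fin_mk_eq (j := k + 1) hh
            rw [hy2] at hy
            exact absurd hy hd2
          have hzk : (z : ℕ) ≠ k + 1 := by
            intro hh
            have hz2 : z = ⟨k + 1, by omega⟩ := fin_mk_eq (j := k + 1) hh
            rw [hz2] at hz
            exact absurd hz hd2
          exact Fin.ext (by omega)
        · refine not_mem_floodStep hd2 (card_adj_le_one ?_)
          intro y hy z hz hadjy hadjz
          rw [SimpleGraph.pathGraph_adj] at hadjy hadjz
          simp only [Fin.val_mk] at hadjy hadjz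
          have hyk : (y : ℕ) ≠ k := by
            intro hh
            have hy2 : y = ⟨k, by omega⟩ := fin_mk_eq (j := k) hh
            rw [hy2] at hy
            exact absurd hy hd1
          have hzk : (z : ℕ) ≠ k := by
            intro hh
            have hz2 : z = ⟨k, by omega⟩ := fin_mk_eq (j := k) hh
            rw [hz2] at hz
            exact absurd hz hd1
          exact Fin.ext (by omega)
      · rw [mem_image_val C (by omega)] at h1
        refine not_floods_of_invariant (fun D => (⟨m - 1, by omega⟩ : Fin m) ∉ D)
          ?_ h1 (by simp) hF
        intro D hd
        refine not_mem_floodStep hd (card_adj_le_one ?_)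
        intro y hy z hz hadjy hadjz
        rw [SimpleGraph.pathGraph_adj] at hadjy hadjz
        simp only [Fin.val_mk] at hadjy hadjz
        have := y.isLt
        have := z.isLt
        exact Fin.ext (by omega)
    · rw [mem_image_val C (by omega)] at h0
      refine not_floods_of_invariant (fun D => (⟨0, by omega⟩ : Fin m) ∉ D)
        ?_ h0 (by simp) hF
      intro D hd
      refine not_mem_floodStep hd (card_adj_le_one ?_)
      intro y hy z hz hadjy hadjz
      rw [SimpleGraph.pathGraph_adj] at hadjy hadjz
      simp only [Fin.val_mk] at hadjy hadjz
      exact Fin.ext (by omega)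
  · intro hP
    refine floods_of_progress (fun D => pcond m (D.image Fin.val)) ?_ ?_ hP
    · intro C D hsub h
      obtain ⟨h0, h1, hg⟩ := h
      have himg := Finset.image_subset_image (f := Fin.val) hsub
      exact ⟨himg h0, himg h1, fun k hk => (hg k hk).imp (fun h => himg h) (fun h => himg h)⟩
    · intro D hQ hne
      obtain ⟨h0, h1, hg⟩ := hQ
      have hTne : (univ \ D).Nonempty := by
        rw [Finset.sdiff_nonempty]
        intro hsub
        exact hne (Finset.univ_subset_iff.mp hsub)
      have hTne' : ((univ \ D).image Fin.val).Nonempty := hTne.image _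
      obtain ⟨v, hv, hvk⟩ :=
        Finset.mem_image.mp (((univ \ D).image Fin.val).min'_mem hTne')
      set k := ((univ \ D).image Fin.val).min' hTne' with hkdef
      have hvD : v ∉ D := (Finset.mem_sdiff.mp hv).2
      have hklt : k < m := hvk ▸ v.isLt
      have hmin : ∀ j, j < m → ∀ (hj : j < m), (⟨j, hj⟩ : Fin m) ∉ D → k ≤ j := by
        intro j _ hj hjD
        apply Finset.min'_le
        exact Finset.mem_image.mpr ⟨⟨j, hj⟩, Finset.mem_sdiff.mpr ⟨Finset.mem_univ _, hjD⟩, rfl⟩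
      clear_value k
      have hk0 : k ≠ 0 := by
        intro hkk
        rw [mem_image_val D (by omega)] at h0
        have hveq : v = ⟨0, by omega⟩ := fin_mk_eq (j := 0) (by omega)
        rw [hveq] at hvD
        exact hvD h0
      have hklast : k ≠ m - 1 := by
        intro hkk
        rw [mem_image_val D (by omega : m - 1 < m)] at h1
        have hveq : v = ⟨m - 1, by omega⟩ := fin_mk_eq (j := m - 1) (by omega)
        rw [hveq] at hvD
        exact hvD h1
      have hprev : (⟨k - 1, by omega⟩ : Fin m) ∈ D := by
        by_contra hnot
        have := hmin (k - 1) (by omega) (by omega) hnot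
        omega
      have hnext : (⟨k + 1, by omega⟩ : Fin m) ∈ D := by
        rcases hg k (by omega) with h | h
        · rw [mem_image_val D (by omega)] at h
          have hveq : v = ⟨k, by omega⟩ := fin_mk_eq (j := k) (by omega)
          rw [hveq] at hvD
          exact absurd h hvD
        · rwa [mem_image_val D (by omega)] at h
      rw [Finset.ssubset_iff_of_subset (subset_floodStep _ D)]
      have hbk : k < m := by omega
      have hb1 : k - 1 < m := by omega
      have hb2 : k + 1 < m := by omega
      refine ⟨⟨k, hbk⟩, ?_, ?_⟩
      · refine mem_floodStep_of_two (a := (⟨k - 1, hb1⟩ : Fin m))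
          (b := (⟨k + 1, hb2⟩ : Fin m)) ?_ hprev hnext ?_ ?_
        · intro hab
          have := congrArg Fin.val hab
          simp only [Fin.val_mk] at this
          omega
        · rw [SimpleGraph.pathGraph_adj]
          simp only [Fin.val_mk]
          right
          omega
        · rw [SimpleGraph.pathGraph_adj]
          simp only [Fin.val_mk]
          left
          trivial
      · have hveq : v = ⟨k, hklt⟩ := fin_mk_eq (j := k) (h := hklt) hvk
        rw [← hveq]
        exact hvD

lemma val_add_one_eq {N : ℕ} (x : Fin (N + 1)) :
    (x + 1).val = if x.val = N then 0 else x.val + 1 := by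
  rw [Fin.val_add_one]
  by_cases h : x = Fin.last N
  · rw [if_pos h, if_pos (by rw [h]; rfl)]
  · rw [if_neg h, if_neg (by
      intro hv
      exact h (Fin.ext (by rw [hv, Fin.val_last])))]

open Fin.CommRing in
lemma floods_cycle_iff {m : ℕ} (hm : 1 ≤ m) (B : Finset (Fin (m + 2))) :
    Floods (SimpleGraph.cycleGraph (m + 2)) B ↔ ccond (m + 2) (B.image Fin.val) := by
  have hlastval : ((⟨m + 1, by omega⟩ : Fin (m + 2)) : ℕ) = m + 1 := rfl
  set lst : Fin (m + 2) := ⟨m + 1, by omega⟩ with hlstdef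
  have hlst1 : lst + 1 = 0 := by
    apply Fin.ext
    rw [val_add_one_eq]
    simp [hlstdef]
  have hadd1 : ∀ i : Fin (m + 2), ((i + 1 : Fin (m + 2)) : ℕ) = ((i : ℕ) + 1) % (m + 2) := by
    intro i
    rw [val_add_one_eq]
    by_cases h : (i : ℕ) = m + 1
    · rw [if_pos h, h, Nat.add_one, Nat.mod_self]
    · rw [if_neg h, Nat.mod_eq_of_lt (by have := i.isLt; omega)]
  have hmem1 : ∀ (D : Finset (Fin (m+2))) (i : Fin (m+2)),
      ((i : ℕ) + 1) % (m + 2) ∈ D.image Fin.val ↔ i + 1 ∈ D := by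
    intro D i
    rw [mem_image_val D (Nat.mod_lt _ (by omega))]
    constructor
    · intro h
      have : (⟨((i : ℕ) + 1) % (m + 2), Nat.mod_lt _ (by omega)⟩ : Fin (m+2)) = i + 1 :=
        Fin.ext (by rw [hadd1 i])
      rwa [this] at h
    · intro h
      have : i + 1 = (⟨((i : ℕ) + 1) % (m + 2), Nat.mod_lt _ (by omega)⟩ : Fin (m+2)) :=
        Fin.ext (by rw [hadd1 i])
      rwa [this] at h
  have hQiff : ∀ D : Finset (Fin (m+2)),
      ccond (m + 2) (D.image Fin.val) ↔ ∀ i : Fin (m+2), i ∈ D ∨ i + 1 ∈ D := by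
    intro D
    constructor
    · intro hc i
      rcases hc (i : ℕ) i.isLt with h | h
      · left; rwa [mem_image_val D i.isLt, Fin.eta] at h
      · right; rwa [hmem1 D i] at h
    · intro h k hk
      rcases h ⟨k, hk⟩ with h' | h'
      · left; rwa [mem_image_val D hk]
      · right
        have := (hmem1 D ⟨k, hk⟩).mpr h'
        exact this
  constructor
  · intro hF
    rw [hQiff]
    intro i
    by_contra hno
    push_neg at hno
    obtain ⟨h1, h2⟩ := hno
    refine not_floods_of_invariant
      (fun D => i ∉ D ∧ i + 1 ∉ D) ?_ ⟨h1, h2⟩ (by simp) hF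
    rintro D ⟨hd1, hd2⟩
    constructor
    · refine not_mem_floodStep hd1 (card_adj_le_one ?_)
      intro y hy z hz hadjy hadjz
      rw [SimpleGraph.cycleGraph_adj] at hadjy hadjz
      have hy' : y = i + lst := by
        rcases hadjy with h | h
        · -- i - y = 1
          linear_combination -h - hlst1
        · -- y - i = 1 → y = i + 1 ∈ D : contradiction
          exfalso
          apply hd2
          have : y = i + 1 := by linear_combination h
          rwa [this] at hy
      have hz' : z = i + lst := by
        rcases hadjz with h | h
        · linear_combination -h - hlst1
        · exfalso
          apply hd2
          have : z = i + 1 := by linear_combination h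
          rwa [this] at hz
      rw [hy', hz']
    · refine not_mem_floodStep hd2 (card_adj_le_one ?_)
      intro y hy z hz hadjy hadjz
      rw [SimpleGraph.cycleGraph_adj] at hadjy hadjz
      have hy' : y = i + 1 + 1 := by
        rcases hadjy with h | h
        · exfalso
          apply hd1
          have : y = i := by linear_combination -h
          rwa [this] at hy
        · linear_combination h
      have hz' : z = i + 1 + 1 := by
        rcases hadjz with h | h
        · exfalso
          apply hd1
          have : z = i := by linear_combination -h
          rwa [this] at hz
        · linear_combination h
      rw [hy', hz']
  · intro hP
    refine floods_of_progress (fun D => ccond (m + 2) (D.image Fin.val)) ?_ ?_ hP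
    · intro C D hsub h
      intro k hk
      have himg := Finset.image_subset_image (f := Fin.val) hsub
      exact (h k hk).imp (fun h' => himg h') (fun h' => himg h')
    · intro D hQ hne
      rw [hQiff] at hQ
      have : ∃ i : Fin (m+2), i ∉ D := by
        by_contra hall
        push_neg at hall
        exact hne (Finset.eq_univ_iff_forall.mpr hall)
      obtain ⟨i, hiD⟩ := this
      have hnext : i + 1 ∈ D := (hQ i).resolve_left hiD
      have hprev : i + lst ∈ D := by
        rcases hQ (i + lst) with h | h
        · exact h
        · exfalso
          apply hiD
          have : i + lst + 1 = i := by linear_combination hlst1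
          rwa [this] at h
      rw [Finset.ssubset_iff_of_subset (subset_floodStep _ D)]
      refine ⟨i, ?_, hiD⟩
      refine mem_floodStep_of_two (a := i + lst) (b := i + 1) ?_ hprev hnext ?_ ?_
      · intro h
        have h2 : lst = 1 := add_left_cancel h
        have := congrArg Fin.val h2
        rw [hlstdef] at this
        simp only [Fin.val_one] at this
        omega
      · rw [SimpleGraph.cycleGraph_adj]
        left
        linear_combination -hlst1
      · rw [SimpleGraph.cycleGraph_adj]
        right
        linear_combination (0 : Fin (m+2))

noncomputable def toP (n : ℕ) (S : Finset ℕ) : Finset ℕ × Finset ℕ :=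
  if n - 1 ∈ S then
    (S.filter (fun k => k < n),
     (S.filter (fun k => n - 1 ≤ k ∧ k ≤ 2 * n - 2)).image (fun k => k - (n - 1)))
  else
    ((S.filter (fun k => n ≤ k)).image (fun k => k - n),
     (S.filter (fun k => k ≤ n - 2)).image (fun k => k + 1))

noncomputable def toS (n : ℕ) (p : Finset ℕ × Finset ℕ) : Finset ℕ :=
  if 0 ∈ p.2 then p.1 ∪ p.2.image (fun b => b + (n - 1)) ∪ {2 * n - 1}
  else p.2.image (fun b => b - 1) ∪ p.1.image (fun a => a + n)

-- membership characterizations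
lemma memB1 {n : ℕ} (hn : 3 ≤ n) (S : Finset ℕ) (j : ℕ) :
    j ∈ (S.filter (fun k => n - 1 ≤ k ∧ k ≤ 2 * n - 2)).image (fun k => k - (n - 1)) ↔
      j ≤ n - 1 ∧ j + (n - 1) ∈ S := by
  simp only [Finset.mem_image, Finset.mem_filter]
  constructor
  · rintro ⟨c, ⟨hc, h1, h2⟩, rfl⟩
    refine ⟨by omega, ?_⟩
    have h3 : c - (n - 1) + (n - 1) = c := by omega
    rw [h3]; exact hc
  · rintro ⟨h1, h2⟩
    exact ⟨j + (n - 1), ⟨h2, by omega, by omega⟩, by omega⟩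

lemma memA2 {n : ℕ} (S : Finset ℕ) (j : ℕ) :
    j ∈ (S.filter (fun k => n ≤ k)).image (fun k => k - n) ↔ j + n ∈ S := by
  simp only [Finset.mem_image, Finset.mem_filter]
  constructor
  · rintro ⟨c, ⟨hc, h1⟩, rfl⟩
    have h3 : c - n + n = c := by omega
    rw [h3]; exact hc
  · intro h
    exact ⟨j + n, ⟨h, by omega⟩, by omega⟩

lemma memB2 {n : ℕ} (hn : 3 ≤ n) (S : Finset ℕ) (j : ℕ) :
    j ∈ (S.filter (fun k => k ≤ n - 2)).image (fun k => k + 1) ↔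
      1 ≤ j ∧ j ≤ n - 1 ∧ j - 1 ∈ S := by
  simp only [Finset.mem_image, Finset.mem_filter]
  constructor
  · rintro ⟨c, ⟨hc, h1⟩, rfl⟩
    refine ⟨by omega, by omega, ?_⟩
    have h3 : c + 1 - 1 = c := by omega
    rw [h3]; exact hc
  · rintro ⟨h1, h2, h3⟩
    exact ⟨j - 1, ⟨h3, by omega⟩, by omega⟩

lemma memS1 {n : ℕ} (A B : Finset ℕ) (k : ℕ) :
    k ∈ A ∪ B.image (fun b => b + (n - 1)) ∪ {2 * n - 1} ↔
      k ∈ A ∨ (n - 1 ≤ k ∧ k - (n - 1) ∈ B) ∨ k = 2 * n - 1 := by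
  simp only [Finset.mem_union, Finset.mem_image, Finset.mem_singleton]
  constructor
  · rintro ((h | ⟨b, hb, rfl⟩) | h)
    · exact Or.inl h
    · refine Or.inr (Or.inl ⟨by omega, ?_⟩)
      have h3 : b + (n - 1) - (n - 1) = b := by omega
      rw [h3]; exact hb
    · exact Or.inr (Or.inr h)
  · rintro (h | ⟨h1, h2⟩ | h)
    · exact Or.inl (Or.inl h)
    · exact Or.inl (Or.inr ⟨k - (n - 1), h2, by omega⟩)
    · exact Or.inr h

lemma memS2 {n : ℕ} (A B : Finset ℕ) (h0 : 0 ∉ B) (k : ℕ) :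
    k ∈ B.image (fun b => b - 1) ∪ A.image (fun a => a + n) ↔
      k + 1 ∈ B ∨ (n ≤ k ∧ k - n ∈ A) := by
  simp only [Finset.mem_union, Finset.mem_image]
  constructor
  · rintro (⟨b, hb, rfl⟩ | ⟨a, ha, rfl⟩)
    · have hb0 : b ≠ 0 := fun h => h0 (h ▸ hb)
      left
      have h3 : b - 1 + 1 = b := by omega
      rw [h3]; exact hb
    · right
      refine ⟨by omega, ?_⟩
      have h3 : a + n - n = a := by omega
      rw [h3]; exact ha
  · rintro (h | ⟨h1, h2⟩)
    · exact Or.inl ⟨k + 1, h, by omega⟩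
    · exact Or.inr ⟨k - n, h2, by omega⟩

lemma card_toP {n : ℕ} (hn : 3 ≤ n) (S : Finset ℕ)
    (hsub : ∀ k ∈ S, k < 2 * n) (h0 : 0 ∈ S) (hlast : 2 * n - 1 ∈ S) :
    (toP n S).1.card + (toP n S).2.card = S.card := by
  rw [toP]
  by_cases hc : n - 1 ∈ S
  · rw [if_pos hc]
    dsimp only
    have hBcard : ((S.filter (fun k => n - 1 ≤ k ∧ k ≤ 2 * n - 2)).image
        (fun k => k - (n - 1))).card = (S.filter (fun k => n - 1 ≤ k ∧ k ≤ 2 * n - 2)).card := by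
      apply Finset.card_image_of_injOn
      intro a ha b hb hab
      simp only [Finset.coe_filter, Set.mem_setOf_eq] at ha hb
      dsimp only at hab
      omega
    rw [hBcard]
    have e1 : S.filter (fun k => n - 1 ≤ k ∧ k ≤ 2 * n - 2) =
        insert (n - 1) (S.filter (fun k => n ≤ k ∧ k ≤ 2 * n - 2)) := by
      ext k
      simp only [Finset.mem_insert, Finset.mem_filter]
      constructor
      · rintro ⟨hk, h1, h2⟩
        by_cases hkn : k = n - 1
        · exact Or.inl hkn
        · exact Or.inr ⟨hk, by omega, by omega⟩
      · rintro (rfl | ⟨hk, h1, h2⟩)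
        · exact ⟨hc, by omega, by omega⟩
        · exact ⟨hk, by omega, by omega⟩
    have e2 : S.filter (fun k => ¬ k < n) = insert (2 * n - 1)
        (S.filter (fun k => n ≤ k ∧ k ≤ 2 * n - 2)) := by
      ext k
      simp only [Finset.mem_insert, Finset.mem_filter, not_lt]
      constructor
      · rintro ⟨hk, h1⟩
        have := hsub k hk
        by_cases hkn : k = 2 * n - 1
        · exact Or.inl hkn
        · exact Or.inr ⟨hk, by omega, by omega⟩
      · rintro (rfl | ⟨hk, h1, h2⟩)
        · exact ⟨hlast, by omega⟩
        · exact ⟨hk, by omega⟩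
    have hni : (n - 1) ∉ S.filter (fun k => n ≤ k ∧ k ≤ 2 * n - 2) := by
      simp only [Finset.mem_filter]
      omega
    have hni2 : (2 * n - 1) ∉ S.filter (fun k => n ≤ k ∧ k ≤ 2 * n - 2) := by
      simp only [Finset.mem_filter]
      omega
    have htot := Finset.card_filter_add_card_filter_not
      (s := S) (p := fun k => k < n)
    rw [e1, Finset.card_insert_of_notMem hni]
    rw [e2, Finset.card_insert_of_notMem hni2] at htot
    omega
  · rw [if_neg hc]
    dsimp only
    have hAcard : ((S.filter (fun k => n ≤ k)).image (fun k => k - n)).card =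
        (S.filter (fun k => n ≤ k)).card := by
      apply Finset.card_image_of_injOn
      intro a ha b hb hab
      simp only [Finset.coe_filter, Set.mem_setOf_eq] at ha hb
      dsimp only at hab
      omega
    have hBcard : ((S.filter (fun k => k ≤ n - 2)).image (fun k => k + 1)).card =
        (S.filter (fun k => k ≤ n - 2)).card := by
      apply Finset.card_image_of_injOn
      intro a ha b hb hab
      dsimp only at hab
      omega
    rw [hAcard, hBcard]
    have e1 : S.filter (fun k => k ≤ n - 2) = S.filter (fun k => k < n) := by
      ext k
      simp only [Finset.mem_filter]
      constructor
      · rintro ⟨hk, h1⟩; exact ⟨hk, by omega⟩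
      · rintro ⟨hk, h1⟩
        refine ⟨hk, ?_⟩
        have : k ≠ n - 1 := fun h => hc (h ▸ hk)
        omega
    have e2 : S.filter (fun k => ¬ k < n) = S.filter (fun k => n ≤ k) := by
      apply Finset.filter_congr
      intro k _
      simp only [not_lt, eq_iff_iff]
    have htot := Finset.card_filter_add_card_filter_not
      (s := S) (p := fun k => k < n)
    rw [e1]
    rw [e2] at htot
    omega

lemma toP_mem {n : ℕ} (hn : 3 ≤ n) {S : Finset ℕ}
    (hS : S ∈ (Finset.range (2 * n)).powerset.filter (pcond (2 * n))) :
    toP n S ∈ ((Finset.range n).powerset.filter (pcond n)) ×ˢ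
      ((Finset.range n).powerset.filter (ccond n)) := by
  rw [Finset.mem_filter, Finset.mem_powerset] at hS
  obtain ⟨hsub, hpc⟩ := hS
  obtain ⟨h0, hlast, hgap⟩ := hpc
  have hsub' : ∀ k ∈ S, k < 2 * n := fun k hk => Finset.mem_range.mp (hsub hk)
  rw [Finset.mem_product]
  rw [toP]
  by_cases hc : n - 1 ∈ S
  · rw [if_pos hc]
    constructor
    · rw [Finset.mem_filter, Finset.mem_powerset]
      constructor
      · intro k hk
        rw [Finset.mem_filter] at hk
        exact Finset.mem_range.mpr hk.2
      · refine ⟨Finset.mem_filter.mpr ⟨h0, by omega⟩,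
          Finset.mem_filter.mpr ⟨hc, by omega⟩, ?_⟩
        intro k hk
        rcases hgap k (by omega) with h | h
        · exact Or.inl (Finset.mem_filter.mpr ⟨h, by omega⟩)
        · exact Or.inr (Finset.mem_filter.mpr ⟨h, by omega⟩)
    · rw [Finset.mem_filter, Finset.mem_powerset]
      constructor
      · intro j hj
        rw [memB1 hn] at hj
        exact Finset.mem_range.mpr (by omega)
      · intro j hj
        by_cases hj1 : j + 1 < n
        · have hmod : (j + 1) % n = j + 1 := Nat.mod_eq_of_lt hj1
          rcases hgap (j + (n - 1)) (by omega) with h | h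
          · exact Or.inl ((memB1 hn S j).mpr ⟨by omega, h⟩)
          · refine Or.inr ?_
            rw [hmod, memB1 hn]
            refine ⟨by omega, ?_⟩
            have e : j + 1 + (n - 1) = j + (n - 1) + 1 := by omega
            rw [e]; exact h
        · have hjn : j = n - 1 := by omega
          refine Or.inr ?_
          have hmod : (j + 1) % n = 0 := by
            have e : j + 1 = n := by omega
            rw [e, Nat.mod_self]
          rw [hmod, memB1 hn]
          refine ⟨by omega, ?_⟩
          have e : 0 + (n - 1) = n - 1 := by omega
          rw [e]; exact hc
  · rw [if_neg hc]
    have hn2 : n - 2 ∈ S := by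
      rcases hgap (n - 2) (by omega) with h | h
      · exact h
      · exfalso; apply hc
        have e : n - 2 + 1 = n - 1 := by omega
        rwa [e] at h
    have hnn : n ∈ S := by
      rcases hgap (n - 1) (by omega) with h | h
      · exact absurd h hc
      · have e : n - 1 + 1 = n := by omega
        rwa [e] at h
    constructor
    · rw [Finset.mem_filter, Finset.mem_powerset]
      constructor
      · intro j hj
        rw [memA2] at hj
        have := hsub' _ hj
        exact Finset.mem_range.mpr (by omega)
      · refine ⟨(memA2 S 0).mpr (by rwa [Nat.zero_add]), ?_, ?_⟩
        · rw [memA2]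
          have e : n - 1 + n = 2 * n - 1 := by omega
          rw [e]; exact hlast
        · intro k hk
          rcases hgap (k + n) (by omega) with h | h
          · exact Or.inl ((memA2 S k).mpr h)
          · refine Or.inr ((memA2 S (k + 1)).mpr ?_)
            have e : k + 1 + n = k + n + 1 := by omega
            rw [e]; exact h
    · rw [Finset.mem_filter, Finset.mem_powerset]
      constructor
      · intro j hj
        rw [memB2 hn] at hj
        exact Finset.mem_range.mpr (by omega)
      · intro j hj
        by_cases hj0 : j = 0
        · refine Or.inr ?_
          subst hj0
          have hmod : (0 + 1) % n = 1 := Nat.mod_eq_of_lt (by omega)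
          rw [hmod, memB2 hn]
          exact ⟨le_refl 1, by omega, by simpa using h0⟩
        · by_cases hjlast : j = n - 1
          · refine Or.inl ?_
            rw [memB2 hn]
            refine ⟨by omega, by omega, ?_⟩
            have e : j - 1 = n - 2 := by omega
            rw [e]; exact hn2
          · have hmod : (j + 1) % n = j + 1 := Nat.mod_eq_of_lt (by omega)
            rcases hgap (j - 1) (by omega) with h | h
            · exact Or.inl ((memB2 hn S j).mpr ⟨by omega, by omega, h⟩)
            · refine Or.inr ?_
              rw [hmod, memB2 hn]
              refine ⟨by omega, by omega, ?_⟩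
              have e : j + 1 - 1 = j - 1 + 1 := by omega
              rw [e]; exact h

lemma toS_mem {n : ℕ} (hn : 3 ≤ n) {p : Finset ℕ × Finset ℕ}
    (hp : p ∈ ((Finset.range n).powerset.filter (pcond n)) ×ˢ
      ((Finset.range n).powerset.filter (ccond n))) :
    toS n p ∈ (Finset.range (2 * n)).powerset.filter (pcond (2 * n)) := by
  obtain ⟨A, B⟩ := p
  rw [Finset.mem_product, Finset.mem_filter, Finset.mem_filter,
      Finset.mem_powerset, Finset.mem_powerset] at hp
  obtain ⟨⟨hAsub, hA0, hAlast, hAgap⟩, hBsub, hBc⟩ := hp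
  have hAsub' : ∀ k ∈ A, k < n := fun k hk => Finset.mem_range.mp (hAsub hk)
  have hBsub' : ∀ k ∈ B, k < n := fun k hk => Finset.mem_range.mp (hBsub hk)
  rw [Finset.mem_filter, Finset.mem_powerset, toS]
  by_cases h0B : (0 : ℕ) ∈ B
  · rw [if_pos h0B]
    constructor
    · intro k hk
      rw [memS1] at hk
      rcases hk with h | ⟨h1, h2⟩ | h
      · exact Finset.mem_range.mpr (by have := hAsub' _ h; omega)
      · exact Finset.mem_range.mpr (by have := hBsub' _ h2; omega)
      · exact Finset.mem_range.mpr (by omega)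
    · refine ⟨(memS1 A B 0).mpr (Or.inl hA0),
        (memS1 A B (2 * n - 1)).mpr (Or.inr (Or.inr rfl)), ?_⟩
      intro k hk
      by_cases hk1 : k + 2 ≤ n
      · rcases hAgap k hk1 with h | h
        · exact Or.inl ((memS1 A B k).mpr (Or.inl h))
        · exact Or.inr ((memS1 A B (k + 1)).mpr (Or.inl h))
      · by_cases hk2 : k ≤ 2 * n - 3
        · have hj : k - (n - 1) < n := by omega
          rcases hBc (k - (n - 1)) hj with h | h
          · exact Or.inl ((memS1 A B k).mpr (Or.inr (Or.inl ⟨by omega, h⟩)))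
          · have hmod : (k - (n - 1) + 1) % n = k - (n - 1) + 1 :=
              Nat.mod_eq_of_lt (by omega)
            rw [hmod] at h
            refine Or.inr ((memS1 A B (k + 1)).mpr (Or.inr (Or.inl ⟨by omega, ?_⟩)))
            have e : k + 1 - (n - 1) = k - (n - 1) + 1 := by omega
            rw [e]; exact h
        · refine Or.inr ((memS1 A B (k + 1)).mpr (Or.inr (Or.inr (by omega))))
  · rw [if_neg h0B]
    have h1B : (1 : ℕ) ∈ B := by
      rcases hBc 0 (by omega) with h | h
      · exact absurd h h0B
      · rwa [Nat.mod_eq_of_lt (by omega)] at h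
    have hlastB : n - 1 ∈ B := by
      rcases hBc (n - 1) (by omega) with h | h
      · exact h
      · exfalso
        apply h0B
        have e : (n - 1 + 1) % n = 0 := by
          have e2 : n - 1 + 1 = n := by omega
          rw [e2, Nat.mod_self]
        rwa [e] at h
    constructor
    · intro k hk
      rw [memS2 A B h0B] at hk
      rcases hk with h | ⟨h1, h2⟩
      · exact Finset.mem_range.mpr (by have := hBsub' _ h; omega)
      · exact Finset.mem_range.mpr (by have := hAsub' _ h2; omega)
    · refine ⟨(memS2 A B h0B 0).mpr (Or.inl (by rwa [Nat.zero_add])),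
        (memS2 A B h0B (2 * n - 1)).mpr (Or.inr ⟨by omega, ?_⟩), ?_⟩
      · have e : 2 * n - 1 - n = n - 1 := by omega
        rw [e]; exact hAlast
      · intro k hk
        by_cases hk1 : k + 2 ≤ n - 1
        · rcases hBc (k + 1) (by omega) with h | h
          · exact Or.inl ((memS2 A B h0B k).mpr (Or.inl h))
          · rw [Nat.mod_eq_of_lt (by omega)] at h
            exact Or.inr ((memS2 A B h0B (k + 1)).mpr (Or.inl h))
        · by_cases hk2 : k = n - 2
          · refine Or.inl ((memS2 A B h0B k).mpr (Or.inl ?_))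
            have e : k + 1 = n - 1 := by omega
            rw [e]; exact hlastB
          · by_cases hk3 : k = n - 1
            · refine Or.inr ((memS2 A B h0B (k + 1)).mpr (Or.inr ⟨by omega, ?_⟩))
              have e : k + 1 - n = 0 := by omega
              rw [e]; exact hA0
            · have hkn : n ≤ k := by omega
              rcases hAgap (k - n) (by omega) with h | h
              · exact Or.inl ((memS2 A B h0B k).mpr (Or.inr ⟨hkn, h⟩))
              · refine Or.inr ((memS2 A B h0B (k + 1)).mpr (Or.inr ⟨by omega, ?_⟩))
                have e : k + 1 - n = k - n + 1 := by omega
                rw [e]; exact h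

lemma toS_toP {n : ℕ} (hn : 3 ≤ n) {S : Finset ℕ}
    (hS : S ∈ (Finset.range (2 * n)).powerset.filter (pcond (2 * n))) :
    toS n (toP n S) = S := by
  rw [Finset.mem_filter, Finset.mem_powerset] at hS
  obtain ⟨hsub, h0, hlast, hgap⟩ := hS
  have hsub' : ∀ k ∈ S, k < 2 * n := fun k hk => Finset.mem_range.mp (hsub hk)
  rw [toP]
  by_cases hc : n - 1 ∈ S
  · rw [if_pos hc, toS]
    dsimp only
    have h0B : (0 : ℕ) ∈ (S.filter (fun k => n - 1 ≤ k ∧ k ≤ 2 * n - 2)).image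
        (fun k => k - (n - 1)) := by
      rw [memB1 hn]
      refine ⟨by omega, ?_⟩
      have e : 0 + (n - 1) = n - 1 := by omega
      rw [e]; exact hc
    rw [if_pos h0B]
    ext k
    rw [memS1]
    constructor
    · rintro (h | ⟨h1, h2⟩ | h)
      · exact (Finset.mem_filter.mp h).1
      · rw [memB1 hn] at h2
        obtain ⟨_, h3⟩ := h2
        have e : k - (n - 1) + (n - 1) = k := by omega
        rwa [e] at h3
      · rw [h]; exact hlast
    · intro hk
      by_cases hk1 : k < n
      · exact Or.inl (Finset.mem_filter.mpr ⟨hk, hk1⟩)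
      · by_cases hk2 : k ≤ 2 * n - 2
        · refine Or.inr (Or.inl ⟨by omega, ?_⟩)
          rw [memB1 hn]
          refine ⟨by omega, ?_⟩
          have e : k - (n - 1) + (n - 1) = k := by omega
          rw [e]; exact hk
        · exact Or.inr (Or.inr (by have := hsub' _ hk; omega))
  · rw [if_neg hc, toS]
    dsimp only
    have h0B : (0 : ℕ) ∉ (S.filter (fun k => k ≤ n - 2)).image (fun k => k + 1) := by
      rw [memB2 hn]
      omega
    rw [if_neg h0B]
    ext k
    rw [memS2 _ _ h0B]
    constructor
    · rintro (h | ⟨h1, h2⟩)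
      · rw [memB2 hn] at h
        obtain ⟨_, _, h3⟩ := h
        have e : k + 1 - 1 = k := by omega
        rwa [e] at h3
      · rw [memA2] at h2
        have e : k - n + n = k := by omega
        rwa [e] at h2
    · intro hk
      by_cases hk1 : k ≤ n - 2
      · refine Or.inl ?_
        rw [memB2 hn]
        refine ⟨by omega, by omega, ?_⟩
        have e : k + 1 - 1 = k := by omega
        rw [e]; exact hk
      · have hkn : k ≠ n - 1 := fun h => hc (h ▸ hk)
        refine Or.inr ⟨by omega, ?_⟩
        rw [memA2]
        have e : k - n + n = k := by omega
        rw [e]; exact hk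

lemma toP_toS {n : ℕ} (hn : 3 ≤ n) {p : Finset ℕ × Finset ℕ}
    (hp : p ∈ ((Finset.range n).powerset.filter (pcond n)) ×ˢ
      ((Finset.range n).powerset.filter (ccond n))) :
    toP n (toS n p) = p := by
  obtain ⟨A, B⟩ := p
  rw [Finset.mem_product, Finset.mem_filter, Finset.mem_filter,
      Finset.mem_powerset, Finset.mem_powerset] at hp
  obtain ⟨⟨hAsub, hA0, hAlast, hAgap⟩, hBsub, hBc⟩ := hp
  have hAsub' : ∀ k ∈ A, k < n := fun k hk => Finset.mem_range.mp (hAsub hk)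
  have hBsub' : ∀ k ∈ B, k < n := fun k hk => Finset.mem_range.mp (hBsub hk)
  rw [toS]
  by_cases h0B : (0 : ℕ) ∈ B
  · rw [if_pos h0B, toP]
    have hcmem : n - 1 ∈ A ∪ B.image (fun b => b + (n - 1)) ∪ {2 * n - 1} := by
      rw [memS1]
      refine Or.inr (Or.inl ⟨le_refl _, ?_⟩)
      have e : n - 1 - (n - 1) = 0 := by omega
      rw [e]; exact h0B
    rw [if_pos hcmem]
    have hfst : (A ∪ B.image (fun b => b + (n - 1)) ∪ {2 * n - 1}).filter
        (fun k => k < n) = A := by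
      ext k
      rw [Finset.mem_filter, memS1]
      constructor
      · rintro ⟨h | ⟨h1, h2⟩ | h, hk⟩
        · exact h
        · have e : k = n - 1 := by
            have := hBsub' _ h2
            omega
          rw [e]; exact hAlast
        · omega
      · intro hk
        exact ⟨Or.inl hk, hAsub' _ hk⟩
    have hsnd : ((A ∪ B.image (fun b => b + (n - 1)) ∪ {2 * n - 1}).filter
        (fun k => n - 1 ≤ k ∧ k ≤ 2 * n - 2)).image (fun k => k - (n - 1)) = B := by
      ext j
      rw [memB1 hn]
      constructor
      · rintro ⟨hj, hmem⟩
        rw [memS1] at hmem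
        rcases hmem with h | ⟨h1, h2⟩ | h
        · have := hAsub' _ h
          have e : j = 0 := by omega
          rw [e]; exact h0B
        · have e : j + (n - 1) - (n - 1) = j := by omega
          rwa [e] at h2
        · omega
      · intro hj
        refine ⟨by have := hBsub' _ hj; omega, ?_⟩
        rw [memS1]
        refine Or.inr (Or.inl ⟨by omega, ?_⟩)
        have e : j + (n - 1) - (n - 1) = j := by omega
        rw [e]; exact hj
    rw [hfst, hsnd]
  · rw [if_neg h0B, toP]
    have hcmem : n - 1 ∉ B.image (fun b => b - 1) ∪ A.image (fun a => a + n) := by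
      rw [memS2 _ _ h0B]
      push_neg
      constructor
      · intro h
        have := hBsub' _ h
        omega
      · intro h
        omega
    rw [if_neg hcmem]
    have hfst : ((B.image (fun b => b - 1) ∪ A.image (fun a => a + n)).filter
        (fun k => n ≤ k)).image (fun k => k - n) = A := by
      ext j
      rw [memA2]
      rw [memS2 _ _ h0B]
      constructor
      · rintro (h | ⟨h1, h2⟩)
        · have := hBsub' _ h
          omega
        · have e : j + n - n = j := by omega
          rwa [e] at h2
      · intro hj
        refine Or.inr ⟨by omega, ?_⟩
        have e : j + n - n = j := by omega
        rw [e]; exact hj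
    have hsnd : ((B.image (fun b => b - 1) ∪ A.image (fun a => a + n)).filter
        (fun k => k ≤ n - 2)).image (fun k => k + 1) = B := by
      ext j
      rw [memB2 hn]
      constructor
      · rintro ⟨h1, h2, h3⟩
        rw [memS2 _ _ h0B] at h3
        rcases h3 with h | ⟨h4, h5⟩
        · have e : j - 1 + 1 = j := by omega
          rwa [e] at h
        · omega
      · intro hj
        have hjn := hBsub' _ hj
        have hj0 : j ≠ 0 := fun h => h0B (h ▸ hj)
        refine ⟨by omega, by omega, ?_⟩
        rw [memS2 _ _ h0B]
        refine Or.inl ?_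
        have e : j - 1 + 1 = j := by omega
        rw [e]; exact hj
    rw [hfst, hsnd]


lemma key (n : ℕ) (hn : 3 ≤ n) :
    (∑ S ∈ (Finset.range (2 * n)).powerset.filter (pcond (2 * n)),
      (X : ℕ[X]) ^ S.card) =
    ∑ p ∈ ((Finset.range n).powerset.filter (pcond n)) ×ˢ
        ((Finset.range n).powerset.filter (ccond n)),
      (X : ℕ[X]) ^ (p.1.card + p.2.card) := by
  refine Finset.sum_bij' (fun S _ => toP n S) (fun p _ => toS n p)
    (fun S hS => toP_mem hn hS) (fun p hp => toS_mem hn hp)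
    (fun S hS => toS_toP hn hS) (fun p hp => toP_toS hn hp)
    (fun S hS => ?_)
  have h2 := hS
  rw [Finset.mem_filter, Finset.mem_powerset] at h2
  obtain ⟨hsub, h0, hlast, hgap⟩ := h2
  rw [card_toP hn S (fun k hk => Finset.mem_range.mp (hsub hk)) h0 hlast]

lemma floodPoly_eq_sum {m : ℕ} (G : SimpleGraph (Fin m)) (cond : Finset ℕ → Prop)
    (h : ∀ C : Finset (Fin m), Floods G C ↔ cond (C.image Fin.val)) :
    floodPoly G = ∑ S ∈ (Finset.range m).powerset.filter cond, X ^ S.card := by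
  unfold floodPoly
  have himg : ∀ S ∈ (Finset.range m).powerset.filter cond,
      (Finset.univ.filter (fun c : Fin m => (c : ℕ) ∈ S)).image Fin.val = S := by
    intro S hS
    rw [Finset.mem_filter, Finset.mem_powerset] at hS
    ext k
    simp only [Finset.mem_image, Finset.mem_filter, Finset.mem_univ, true_and]
    constructor
    · rintro ⟨c, hc, rfl⟩
      exact hc
    · intro hk
      exact ⟨⟨k, Finset.mem_range.mp (hS.1 hk)⟩, hk, rfl⟩
  refine Finset.sum_bij' (fun C _ => C.image Fin.val)
    (fun S _ => Finset.univ.filter (fun c : Fin m => (c : ℕ) ∈ S)) ?_ ?_ ?_ ?_ ?_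
  · intro C hC
    rw [Finset.mem_filter] at hC ⊢
    rw [Finset.mem_powerset]
    refine ⟨?_, (h C).mp hC.2⟩
    intro k hk
    obtain ⟨c, _, rfl⟩ := Finset.mem_image.mp hk
    exact Finset.mem_range.mpr c.isLt
  · intro S hS
    rw [Finset.mem_filter]
    refine ⟨Finset.mem_univ _, (h _).mpr ?_⟩
    rw [himg S hS]
    exact (Finset.mem_filter.mp hS).2
  · intro C hC
    ext c
    simp only [Finset.mem_filter, Finset.mem_univ, true_and, Finset.mem_image]
    constructor
    · rintro ⟨c', hc', hcc⟩
      have : c' = c := Fin.ext hcc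
      rwa [← this]
    · intro hc
      exact ⟨c, hc, rfl⟩
  · intro S hS
    exact himg S hS
  · intro C hC
    rw [Finset.card_image_of_injective _ Fin.val_injective]
end FloodAux

theorem floodPoly_path_two_mul (n : ℕ) (hn : 3 ≤ n) :
    floodPoly (SimpleGraph.pathGraph (2 * n)) =
      floodPoly (SimpleGraph.pathGraph n) * floodPoly (SimpleGraph.cycleGraph n) := by
  obtain ⟨m, rfl⟩ : ∃ m, n = m + 3 := ⟨n - 3, by omega⟩
  rw [FloodAux.floodPoly_eq_sum (SimpleGraph.pathGraph (2 * (m + 3)))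
    (FloodAux.pcond (2 * (m + 3))) (fun C => FloodAux.floods_path_iff (by omega) C)]
  rw [FloodAux.floodPoly_eq_sum (SimpleGraph.pathGraph (m + 3))
    (FloodAux.pcond (m + 3)) (fun C => FloodAux.floods_path_iff (by omega) C)]
  rw [FloodAux.floodPoly_eq_sum (SimpleGraph.cycleGraph (m + 3))
    (FloodAux.ccond (m + 3)) (fun C => FloodAux.floods_cycle_iff (m := m + 1) (by omega) C)]
  rw [FloodAux.key (m + 3) (by omega)]
  rw [Finset.sum_mul_sum]
  rw [Finset.sum_product]
  refine Finset.sum_congr rfl ?_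
  intro A _
  refine Finset.sum_congr rfl ?_
  intro B _
  rw [pow_add]
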